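/- Let Y_1, ..., Y_μ be independent random variables, each uniformly distributed on [0, 1/φ] for some φ ≥ 1, and let Z = 1/min_{i∈[μ]} Y_i. Then for any reals α ≥ 1 and β ≥ 0, E[ min{ α·Z , μ^β } ] ≤ φ·α·(β+1)·μ·ln(μ) + 1. -/

import Mathlib

open MeasureTheory ProbabilityTheory

/-- `Y` is uniformly distributed on the interval `[a, b]` under the probability measure `P`. -/
def UniformIcc {Ω : Type*} [MeasurableSpace Ω] (P : Measure Ω) (a b : ℝ) (Y : Ω → ℝ) : Prop :=
  Measurable Y ∧
    Measure.map Y P = (ENNReal.ofReal (b - a))⁻¹ • volume.restrict (Set.Icc a b)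

/-- if `Y_1, …, Y_μ` are independent uniform random variables on `[0, 1/φ]`
(`φ ≥ 1`) and `Z = 1 / min_i Y_i`, then for all reals `α ≥ 1` and `β ≥ 0`,
`E[ min{ α·Z , μ^β } ] ≤ φ·α·(β+1)·μ·ln μ + 1`. -/
theorem uniform_min_reciprocal_expectation_bound
    {Ω : Type*} [MeasurableSpace Ω] (P : Measure Ω) [IsProbabilityMeasure P]
    (φ : ℝ) (hφ : 1 ≤ φ) (μ : ℕ) (hμ : 0 < μ)
    (Y : Fin μ → Ω → ℝ) (hunif : ∀ i, UniformIcc P 0 (1 / φ) (Y i))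
    (hindep : iIndepFun Y P)
    (Z : Ω → ℝ) (hZ : ∀ ω, Z ω = (⨅ i, Y i ω)⁻¹)
    (α β : ℝ) (hα : 1 ≤ α) (hβ : 0 ≤ β) :
    ∫ ω, min (α * Z ω) ((μ : ℝ) ^ β) ∂P ≤ φ * α * (β + 1) * μ * Real.log μ + 1 := by
  haveI : Nonempty (Fin μ) := Fin.pos_iff_nonempty.mp hμ
  have hφ0 : (0:ℝ) < φ := lt_of_lt_of_le one_pos hφ
  have hα0 : (0:ℝ) < α := lt_of_lt_of_le one_pos hα
  have hμ1 : (1:ℝ) ≤ (μ:ℝ) := by exact_mod_cast hμ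
  have hμ0 : (0:ℝ) < (μ:ℝ) := lt_of_lt_of_le one_pos hμ1
  have hmeasY : ∀ i, Measurable (Y i) := fun i => (hunif i).1
  set t0 : ℝ := 1/φ with ht0def
  have ht0 : 0 < t0 := by positivity
  have hmap : ∀ i, Measure.map (Y i) P
      = (ENNReal.ofReal t0)⁻¹ • volume.restrict (Set.Icc 0 t0) := by
    intro i
    have := (hunif i).2
    simpa using this
  have hofReal : (ENNReal.ofReal t0)⁻¹ = ENNReal.ofReal φ := by
    rw [ht0def, one_div, ENNReal.ofReal_inv_of_pos hφ0, inv_inv]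
  -- tail bound for each coordinate
  have htail : ∀ (i : Fin μ) (t : ℝ), P {ω | Y i ω < t} ≤ ENNReal.ofReal (φ * t) := by
    intro i t
    have h1 : P {ω | Y i ω < t} = Measure.map (Y i) P (Set.Iio t) := by
      rw [Measure.map_apply (hmeasY i) measurableSet_Iio]
      rfl
    rw [h1, hmap i]
    simp only [Measure.smul_apply, Measure.restrict_apply measurableSet_Iio, smul_eq_mul]
    have hsub : Set.Iio t ∩ Set.Icc 0 t0 ⊆ Set.Ico 0 t := fun x hx => ⟨hx.2.1, hx.1⟩
    calc (ENNReal.ofReal t0)⁻¹ * volume (Set.Iio t ∩ Set.Icc 0 t0)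
        ≤ (ENNReal.ofReal t0)⁻¹ * ENNReal.ofReal t := by
          gcongr
          calc volume (Set.Iio t ∩ Set.Icc 0 t0) ≤ volume (Set.Ico 0 t) := measure_mono hsub
          _ = ENNReal.ofReal t := by simp [Real.volume_Ico]
      _ = ENNReal.ofReal (φ * t) := by
          rw [hofReal, ← ENNReal.ofReal_mul hφ0.le]
  -- a.s. each `Y i` lies in `(0, t0]`
  have hne : ∀ i, ∀ᵐ ω ∂P, Y i ω ∈ Set.Ioc 0 t0 := by
    intro i
    rw [ae_iff]
    have h1 : {ω | ¬ Y i ω ∈ Set.Ioc 0 t0} = Y i ⁻¹' (Set.Ioc 0 t0)ᶜ := rfl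
    rw [h1, ← Measure.map_apply (hmeasY i) measurableSet_Ioc.compl, hmap i]
    simp only [Measure.smul_apply, Measure.restrict_apply measurableSet_Ioc.compl,
      smul_eq_mul]
    have h2 : (Set.Ioc 0 t0)ᶜ ∩ Set.Icc 0 t0 ⊆ {(0:ℝ)} := by
      intro x hx
      have hx1 := hx.1
      have hx2 := hx.2
      simp only [Set.mem_compl_iff, Set.mem_Ioc, not_and_or, not_lt, not_le] at hx1
      rcases hx1 with h | h
      · exact le_antisymm h hx2.1 ▸ (by simp [le_antisymm h hx2.1])
      · exact absurd hx2.2 (not_le.mpr h)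
    have h3 : volume ((Set.Ioc 0 t0)ᶜ ∩ Set.Icc 0 t0) = 0 :=
      le_antisymm ((measure_mono h2).trans_eq (by simp)) (zero_le)
    rw [h3, mul_zero]
  have hgood : ∀ᵐ ω ∂P, ∀ i, Y i ω ∈ Set.Ioc 0 t0 := ae_all_iff.mpr hne
  -- notation
  set W : Ω → ℝ := fun ω => ⨅ i, Y i ω with hWdef
  set M : ℝ := (μ : ℝ) ^ β with hMdef
  set c : ℝ := φ * α * μ with hcdef
  have hc1 : (1:ℝ) ≤ c := by
    calc (1:ℝ) = 1 * 1 * 1 := by ring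
    _ ≤ φ * α * μ := by gcongr <;> norm_num [hφ, hα, hμ1]
  have hc0 : (0:ℝ) < c := lt_of_lt_of_le one_pos hc1
  have hM0 : (0:ℝ) < M := Real.rpow_pos_of_pos hμ0 β
  have hWmeas : Measurable W := Measurable.iInf hmeasY
  have hZeq : Z = fun ω => (W ω)⁻¹ := funext hZ
  have hZmeas : Measurable Z := hZeq ▸ hWmeas.inv
  set g : Ω → ℝ := fun ω => min (α * Z ω) M with hgdef
  have hgmeas : Measurable g := (measurable_const.mul hZmeas).min measurable_const
  -- on the good set, W ∈ (0, t0]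
  have hWgood : ∀ ω, (∀ i, Y i ω ∈ Set.Ioc 0 t0) → 0 < W ω ∧ W ω ≤ t0 := by
    intro ω hω
    obtain ⟨i, hi⟩ := exists_eq_ciInf_of_finite (f := fun i => Y i ω)
    constructor
    · rw [hWdef]; simp only; rw [← hi]; exact (hω i).1
    · exact le_trans (ciInf_le (Set.Finite.bddBelow (Set.finite_range _)) (Classical.arbitrary _))
        (hω _).2
  have hg0 : 0 ≤ᵐ[P] g := by
    filter_upwards [hgood] with ω hω
    have hW := hWgood ω hω
    have : 0 < Z ω := by rw [hZ ω]; exact inv_pos.mpr hW.1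
    exact le_min (by positivity) hM0.le
  have hgleM : ∀ ω, g ω ≤ M := fun ω => min_le_right _ _
  have hgint : Integrable g P := by
    refine Integrable.mono' (integrable_const M) hgmeas.aestronglyMeasurable ?_
    filter_upwards [hg0] with ω hω
    rw [Real.norm_eq_abs, abs_of_nonneg hω]
    exact hgleM ω
  -- tail bound for g
  have htailg : ∀ t : ℝ, 0 < t → P {ω | t < g ω} ≤ ENNReal.ofReal (c / t) := by
    intro t ht
    have hsub : {ω | t < g ω} ≤ᵐ[P] ⋃ i, {ω | Y i ω < α / t} := by
      filter_upwards [hgood] with ω hω hgt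
      have hW := hWgood ω hω
      have h1 : t < α * (W ω)⁻¹ := lt_of_lt_of_le hgt (by rw [hgdef]; simp [hZ ω]; exact Or.inl le_rfl)
      have h2 : W ω < α / t := by
        rw [lt_div_iff₀ ht]
        have := (div_lt_iff₀ (inv_pos.mpr hW.1)).mpr (by simpa [div_eq_mul_inv] using h1)
        calc W ω * t = t * W ω := mul_comm _ _
        _ < α := by
          have h3 : t * W ω < α := by
            have := mul_lt_mul_of_pos_right h1 hW.1
            rwa [mul_assoc, inv_mul_cancel₀ hW.1.ne', mul_one] at this
          exact h3
      obtain ⟨i, hi⟩ := exists_lt_of_ciInf_lt h2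
      exact Set.mem_iUnion.mpr ⟨i, hi⟩
    calc P {ω | t < g ω} ≤ P (⋃ i, {ω | Y i ω < α / t}) := measure_mono_ae hsub
      _ ≤ ∑' i, P {ω | Y i ω < α / t} := measure_iUnion_le _
      _ ≤ ∑' (_i : Fin μ), ENNReal.ofReal (φ * (α / t)) := ENNReal.tsum_le_tsum fun i => htail i _
      _ = (μ : ENNReal) * ENNReal.ofReal (φ * (α / t)) := by
          rw [tsum_fintype]
          simp [Finset.sum_const, mul_comm]
      _ = ENNReal.ofReal (c / t) := by
          rw [← ENNReal.ofReal_natCast μ, ← ENNReal.ofReal_mul (by positivity)]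
          congr 1
          field_simp [hcdef]
          ring
  have htailg0 : ∀ t : ℝ, M ≤ t → P {ω | t < g ω} = 0 := by
    intro t htM
    have : {ω | t < g ω} = ∅ := by
      ext ω
      simp only [Set.mem_setOf_eq, Set.mem_empty_iff_false, iff_false, not_lt]
      exact (hgleM ω).trans htM
    simp [this]
  have htailg1 : ∀ t : ℝ, (P {ω | t < g ω}).toReal ≤ 1 := by
    intro t
    exact ENNReal.toReal_le_of_le_ofReal one_pos.le (by simpa using prob_le_one)
  -- layer cake
  have hlayer : ∫ ω, g ω ∂P = ∫ t in Set.Ioi (0:ℝ), (P {ω | t < g ω}).toReal :=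
    hgint.integral_eq_integral_meas_lt hg0
  set F : ℝ → ℝ := fun t => (P {ω | t < g ω}).toReal with hFdef
  have hF0 : ∀ t, 0 ≤ F t := fun t => ENNReal.toReal_nonneg
  have hFle : ∀ t : ℝ, 0 < t → F t ≤ c / t := by
    intro t ht
    exact ENNReal.toReal_le_of_le_ofReal (by positivity) (htailg t ht)
  set L : ℝ := Real.log μ with hLdef
  have hL0 : 0 ≤ L := Real.log_nonneg hμ1
  have hMexp : M = Real.exp (L * β) := by
    rw [hMdef, Real.rpow_def_of_pos hμ0, hLdef]
  have hlogM : Real.log M = β * L := by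
    rw [hMexp, Real.log_exp]; ring
  -- main case split
  rcases le_or_gt M c with hMc | hcM
  · -- M ≤ c : bound F by the indicator of Ioc 0 M
    set G : ℝ → ℝ := Set.indicator (Set.Ioc 0 M) (fun _ => (1:ℝ)) with hGdef
    have hGint : Integrable G (volume.restrict (Set.Ioi 0)) := by
      rw [hGdef, integrable_indicator_iff measurableSet_Ioc]
      refine (integrableOn_const_iff (C := (1:ℝ))).mpr (Or.inr ?_)
      calc (volume.restrict (Set.Ioi 0)) (Set.Ioc 0 M) ≤ volume (Set.Ioc 0 M) :=
            Measure.restrict_le_self _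
        _ < ⊤ := by simp [Real.volume_Ioc]
    have hFG : ∀ t ∈ Set.Ioi (0:ℝ), F t ≤ G t := by
      intro t ht
      rcases le_or_gt t M with h | h
      · have : t ∈ Set.Ioc 0 M := ⟨ht, h⟩
        rw [hGdef, Set.indicator_of_mem this]
        exact htailg1 t
      · have : t ∉ Set.Ioc 0 M := fun hc => absurd hc.2 (not_le.mpr h)
        rw [hGdef, Set.indicator_of_notMem this, hFdef]
        simp [htailg0 t h.le]
    have h1 : ∫ t in Set.Ioi (0:ℝ), F t ≤ ∫ t in Set.Ioi (0:ℝ), G t := by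
      refine integral_mono_of_nonneg ?_ hGint ?_
      · exact Filter.Eventually.of_forall fun t => hF0 t
      · exact (ae_restrict_iff' measurableSet_Ioi).mpr (Filter.Eventually.of_forall hFG)
    have h2 : ∫ t in Set.Ioi (0:ℝ), G t = M := by
      rw [hGdef, setIntegral_indicator measurableSet_Ioc]
      have : Set.Ioi (0:ℝ) ∩ Set.Ioc 0 M = Set.Ioc 0 M := by
        ext x; simp only [Set.mem_inter_iff, Set.mem_Ioi, Set.mem_Ioc]; tauto
      rw [this]
      simp [Real.volume_Ioc, hM0.le]
    -- arithmetic : M ≤ c(β+1)L + 1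
    have hexp : M * (1 - β * L) ≤ 1 := by
      have h3 : (-(L * β)) + 1 ≤ Real.exp (-(L * β)) := Real.add_one_le_exp _
      have h4 : Real.exp (-(L * β)) = M⁻¹ := by rw [hMexp, Real.exp_neg]
      rw [h4] at h3
      have h5 := mul_le_mul_of_nonneg_left h3 hM0.le
      rw [mul_inv_cancel₀ hM0.ne'] at h5
      nlinarith [h5]
    have hM1 : M ≤ c * (β + 1) * L + 1 := by
      have h6 : β * L * M ≤ β * L * c := mul_le_mul_of_nonneg_left hMc (mul_nonneg hβ hL0)
      have h7 : 0 ≤ L * c := mul_nonneg hL0 hc0.le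
      nlinarith [hexp, h6, h7]
    calc ∫ ω, g ω ∂P = ∫ t in Set.Ioi (0:ℝ), F t := hlayer
      _ ≤ M := by rw [← h2]; exact h1
      _ ≤ c * (β + 1) * L + 1 := hM1
      _ = φ * α * (β + 1) * μ * Real.log μ + 1 := by rw [hcdef, hLdef]; ring
  · -- c < M
    set G : ℝ → ℝ := fun t => Set.indicator (Set.Ioc 0 c) (fun _ => (1:ℝ)) t
      + Set.indicator (Set.Ioc c M) (fun s => c / s) t with hGdef
    have hint1 : Integrable (Set.indicator (Set.Ioc 0 c) (fun _ => (1:ℝ)))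
        (volume.restrict (Set.Ioi 0)) := by
      rw [integrable_indicator_iff measurableSet_Ioc]
      refine (integrableOn_const_iff (C := (1:ℝ))).mpr (Or.inr ?_)
      calc (volume.restrict (Set.Ioi 0)) (Set.Ioc 0 c) ≤ volume (Set.Ioc 0 c) :=
            Measure.restrict_le_self _
        _ < ⊤ := by simp [Real.volume_Ioc]
    have hinv_int : IntegrableOn (fun s : ℝ => c / s) (Set.Ioc c M) volume := by
      refine Integrable.mono' (g := fun _ => (1:ℝ)) ?_ ?_ ?_
      · exact (integrableOn_const_iff (C := (1:ℝ))).mpr (Or.inr (by simp [Real.volume_Ioc]))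
      · exact (measurable_const.div measurable_id).aestronglyMeasurable
      · refine (ae_restrict_iff' measurableSet_Ioc).mpr (Filter.Eventually.of_forall ?_)
        intro s hs
        have hs0 : 0 < s := lt_trans hc0 hs.1
        rw [Real.norm_eq_abs, abs_of_nonneg (by positivity), div_le_one hs0]
        exact hs.1.le
    have hrr : (volume.restrict (Set.Ioi (0:ℝ))).restrict (Set.Ioc c M)
        = volume.restrict (Set.Ioc c M) := by
      rw [Measure.restrict_restrict measurableSet_Ioc]
      congr 1
      ext x
      simp only [Set.mem_inter_iff, Set.mem_Ioc, Set.mem_Ioi]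
      exact ⟨fun h => h.1, fun h => ⟨h, lt_trans hc0 h.1⟩⟩
    have hint2 : Integrable (Set.indicator (Set.Ioc c M) (fun s => c / s))
        (volume.restrict (Set.Ioi 0)) := by
      rw [integrable_indicator_iff measurableSet_Ioc]
      rw [IntegrableOn, hrr]
      exact hinv_int
    have hGint : Integrable G (volume.restrict (Set.Ioi 0)) := hint1.add hint2
    have hFG : ∀ t ∈ Set.Ioi (0:ℝ), F t ≤ G t := by
      intro t ht
      simp only [Set.mem_Ioi] at ht
      rcases le_or_gt t c with h | h
      · have h1 : t ∈ Set.Ioc 0 c := ⟨ht, h⟩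
        have h2 : t ∉ Set.Ioc c M := fun hc => absurd hc.1 (not_lt.mpr h)
        rw [hGdef]
        simp only [Set.indicator_of_mem h1, Set.indicator_of_notMem h2, add_zero]
        exact htailg1 t
      · rcases le_or_gt t M with h' | h'
        · have h1 : t ∉ Set.Ioc 0 c := fun hc => absurd hc.2 (not_le.mpr h)
          have h2 : t ∈ Set.Ioc c M := ⟨h, h'⟩
          rw [hGdef]
          simp only [Set.indicator_of_notMem h1, Set.indicator_of_mem h2, zero_add]
          exact hFle t ht
        · have h1 : t ∉ Set.Ioc 0 c := fun hc => absurd hc.2 (not_le.mpr h)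
          have h2 : t ∉ Set.Ioc c M := fun hc => absurd hc.2 (not_le.mpr h')
          rw [hGdef]
          simp only [Set.indicator_of_notMem h1, Set.indicator_of_notMem h2, add_zero, hFdef]
          simp [htailg0 t h'.le]
    have h1 : ∫ t in Set.Ioi (0:ℝ), F t ≤ ∫ t in Set.Ioi (0:ℝ), G t := by
      refine integral_mono_of_nonneg ?_ hGint ?_
      · exact Filter.Eventually.of_forall fun t => hF0 t
      · exact (ae_restrict_iff' measurableSet_Ioi).mpr (Filter.Eventually.of_forall hFG)
    have h2 : ∫ t in Set.Ioi (0:ℝ), G t = c + c * Real.log (M / c) := by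
      rw [hGdef, integral_add hint1 hint2]
      congr 1
      · rw [setIntegral_indicator measurableSet_Ioc]
        have he : Set.Ioi (0:ℝ) ∩ Set.Ioc 0 c = Set.Ioc 0 c := by
          ext x; simp only [Set.mem_inter_iff, Set.mem_Ioi, Set.mem_Ioc]; tauto
        rw [he]
        simp [Real.volume_Ioc, hc0.le]
      · rw [setIntegral_indicator measurableSet_Ioc]
        have he : Set.Ioi (0:ℝ) ∩ Set.Ioc c M = Set.Ioc c M := by
          ext x
          simp only [Set.mem_inter_iff, Set.mem_Ioi, Set.mem_Ioc]
          constructor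
          · tauto
          · intro hx; exact ⟨lt_trans hc0 hx.1, hx⟩
        rw [he, ← intervalIntegral.integral_of_le hcM.le]
        have : ∀ s ∈ Set.uIcc c M, s ≠ 0 := by
          intro s hs
          rw [Set.uIcc_of_le hcM.le] at hs
          exact ne_of_gt (lt_of_lt_of_le hc0 hs.1)
        rw [show (fun s : ℝ => c / s) = (fun s : ℝ => c * s⁻¹) by
          funext s; rw [div_eq_mul_inv]]
        rw [intervalIntegral.integral_const_mul, integral_inv_of_pos hc0 (hc0.trans hcM)]
    -- μ ≥ 2 in this case
    have hμ2 : (2:ℝ) ≤ (μ:ℝ) := by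
      by_contra hlt
      push_neg at hlt
      have h1 : μ = 1 := by
        have h2 : μ < 2 := by exact_mod_cast hlt
        omega
      have h3 : (1:ℝ) < M := lt_of_le_of_lt hc1 hcM
      rw [hMdef, h1] at h3
      simp at h3
    have hL2 : Real.log 2 ≤ L := Real.log_le_log two_pos hμ2
    have hcμ : (μ:ℝ) ≤ c := by
      calc (μ:ℝ) = 1 * 1 * μ := by ring
      _ ≤ φ * α * μ := by gcongr
    have hLc : L ≤ Real.log c := Real.log_le_log hμ0 hcμ
    have hlog2 : (0.6931471803:ℝ) < Real.log 2 := Real.log_two_gt_d9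
    have harith : c + c * Real.log (M / c) ≤ c * (β + 1) * L + 1 := by
      rw [Real.log_div hM0.ne' hc0.ne', hlogM]
      have hA : c * Real.log 2 ≤ c * L := mul_le_mul_of_nonneg_left hL2 hc0.le
      have hB : c * L ≤ c * Real.log c := mul_le_mul_of_nonneg_left hLc hc0.le
      have hC : c * 0.6931471803 < c * Real.log 2 := by
        exact mul_lt_mul_of_pos_left hlog2 hc0
      linarith
    calc ∫ ω, g ω ∂P = ∫ t in Set.Ioi (0:ℝ), F t := hlayer
      _ ≤ c + c * Real.log (M / c) := by rw [← h2]; exact h1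
      _ ≤ c * (β + 1) * L + 1 := harith
      _ = φ * α * (β + 1) * μ * Real.log μ + 1 := by rw [hcdef, hLdef]; ring
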